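/- With sequences x_n and y_n defined by the same recurrence x_n = (1/h_0)(x_{n-2} - \sum_{i=1}^{n-1} h_{n-i} x_i) but initial values x_0=1, x_1=0 and y_0=0, y_1=1 respectively, one has y_n = h_0 x_{n+1} for all n \geq 0. -/

import Mathlib

theorem stmt_1 (h : ℕ → ℝ) (hnn : ∀ k, 0 ≤ h k) (hsum : HasSum h 1)
    (h0 : 0 < h 0) (x y : ℕ → ℝ) (hx0 : x 0 = 1) (hx1 : x 1 = 0)
    (hy0 : y 0 = 0) (hy1 : y 1 = 1)
    (hxrec : ∀ n, 2 ≤ n →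
      x n = (1 / h 0) * (x (n - 2) - ∑ i ∈ Finset.Icc 1 (n - 1), h (n - i) * x i))
    (hyrec : ∀ n, 2 ≤ n →
      y n = (1 / h 0) * (y (n - 2) - ∑ i ∈ Finset.Icc 1 (n - 1), h (n - i) * y i)) :
    ∀ n : ℕ, y n = h 0 * x (n + 1) := by
  have hne : h 0 ≠ 0 := ne_of_gt h0
  intro n
  induction n using Nat.strong_induction_on with
  | _ n ih =>
    match n with
    | 0 =>
      have hx2 := hxrec 2 (by norm_num)
      simp [hy0, hx1]
    | 1 =>
      have hx2 := hxrec 2 (by norm_num)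
      simp [hx0, hx1, Finset.Icc_self] at hx2
      rw [hy1, hx2]
      field_simp
    | (m + 2) =>
      have hY := hyrec (m + 2) (by omega)
      have hX := hxrec (m + 3) (by omega)
      simp only [show m + 2 - 1 = m + 1 by omega, show m + 2 - 2 = m by omega,
        show m + 3 - 2 = m + 1 by omega, show m + 3 - 1 = m + 2 by omega] at hY hX
      -- rewrite y's in terms of x's
      have hsum1 : ∑ i ∈ Finset.Icc 1 (m + 1), h (m + 2 - i) * y i
          = h 0 * ∑ i ∈ Finset.Icc 1 (m + 1), h (m + 2 - i) * x (i + 1) := by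
        rw [Finset.mul_sum]
        refine Finset.sum_congr rfl fun i hi => ?_
        rw [ih i (by simp [Finset.mem_Icc] at hi; omega)]
        ring
      have hkey : ∑ i ∈ Finset.Icc 1 (m + 2), h (m + 3 - i) * x i
          = ∑ i ∈ Finset.Icc 1 (m + 1), h (m + 2 - i) * x (i + 1) := by
        have hset : Finset.Icc 1 (m + 2) = insert 1 (Finset.Icc 2 (m + 2)) := by
          ext j; simp [Finset.mem_Icc]; omega
        rw [hset, Finset.sum_insert (by simp [Finset.mem_Icc])]
        rw [hx1, mul_zero, zero_add]
        have hmap : Finset.map (addRightEmbedding 1) (Finset.Icc 1 (m + 1))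
            = Finset.Icc 2 (m + 2) := Finset.map_add_right_Icc 1 (m + 1) 1
        rw [← hmap, Finset.sum_map]
        refine Finset.sum_congr rfl fun i hi => ?_
        simp only [addRightEmbedding_apply]
        have : m + 3 - (i + 1) = m + 2 - i := by omega
        rw [this]
      rw [hY, hsum1, ih m (by omega), hX, hkey]
      field_simp
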